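/- In an e-ring, if d,e,f ∈ E with d+e+f ∈ E and both d+e and d+f are projections, then d, e, and f are all projections. -/
import Mathlib


/-- An e-ring: an associative unital ring `R` together with a set `E` of effects.
`E⁺` is the additive submonoid generated by `E` (the set of finite sums of effects). -/
structure ERing (R : Type*) [Ring R] where
  E : Set R
  zero_mem : (0:R) ∈ E
  one_mem : (1:R) ∈ E
  compl_mem : ∀ e ∈ E, 1 - e ∈ E
  ax_i : ∀ a ∈ AddSubmonoid.closure E, -a ∈ AddSubmonoid.closure E → a = 0
  ax_ii : ∀ a ∈ AddSubmonoid.closure E, 1 - a ∈ AddSubmonoid.closure E → a ∈ E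
  ax_iii : ∀ a ∈ AddSubmonoid.closure E, ∀ b ∈ AddSubmonoid.closure E,
    a * b = b * a → a * b ∈ AddSubmonoid.closure E
  ax_iv : ∀ a ∈ AddSubmonoid.closure E, ∀ b ∈ AddSubmonoid.closure E,
    a * b * a ∈ AddSubmonoid.closure E
  ax_v : ∀ a ∈ AddSubmonoid.closure E, ∀ b ∈ AddSubmonoid.closure E,
    a * b * a = 0 → a * b = 0 ∧ b * a = 0
  ax_vi : ∀ a ∈ AddSubmonoid.closure E, ∀ b ∈ AddSubmonoid.closure E,
    (a - b) * (a - b) ∈ AddSubmonoid.closure E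

namespace ERing

variable {R : Type*} [Ring R]

/-- The positive cone `E⁺`: all finite sums of effects. -/
def Ep (S : ERing R) : Set R := (AddSubmonoid.closure S.E : Set R)

/-- The directed group `G = E⁺ − E⁺` (as a subset of `R`). -/
def G (S : ERing R) : Set R := {x | ∃ a ∈ S.Ep, ∃ b ∈ S.Ep, x = a - b}

/-- The partial order with positive cone `E⁺`: `g ≤ h` iff `h − g ∈ E⁺`. -/
def le (S : ERing R) (g h : R) : Prop := h - g ∈ S.Ep

/-- The set of projections: idempotent elements of `G`. -/
def P (S : ERing R) : Set R := {p | p ∈ S.G ∧ p * p = p}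

end ERing

/-- If `b` is idempotent, `a, b - a, 1 - b ∈ E⁺`, then `b` absorbs `a`. -/
lemma ERing.absorb {R : Type*} [Ring R] (S : ERing R) {a b : R}
    (ha : a ∈ AddSubmonoid.closure S.E) (hba : b - a ∈ AddSubmonoid.closure S.E)
    (hb2 : b * b = b) (h1b : (1:R) - b ∈ AddSubmonoid.closure S.E) :
    b * a = a ∧ a * b = a := by
  have hwaw : (1 - b) * a * (1 - b) ∈ AddSubmonoid.closure S.E := S.ax_iv _ h1b _ ha
  have hwbaw : (1 - b) * (b - a) * (1 - b) ∈ AddSubmonoid.closure S.E := S.ax_iv _ h1b _ hba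
  have hb0 : (1 - b) * b = 0 := by rw [sub_mul, one_mul, hb2, sub_self]
  have hkey : (1 - b) * (b - a) * (1 - b) = -((1 - b) * a * (1 - b)) := by
    rw [mul_sub (1 - b) b a, hb0, zero_sub, neg_mul]
  have hzero : (1 - b) * a * (1 - b) = 0 :=
    S.ax_i _ hwaw (by rw [← hkey]; exact hwbaw)
  have h := S.ax_v _ h1b _ ha hzero
  constructor
  · have h1 := h.1
    rw [sub_mul, one_mul, sub_eq_zero] at h1
    exact h1.symm
  · have h2 := h.2
    rw [mul_sub, mul_one, sub_eq_zero] at h2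
    exact h2.symm

theorem stmt15 {R : Type*} [Ring R] (S : ERing R) :
    ∀ d ∈ S.E, ∀ e ∈ S.E, ∀ f ∈ S.E, d + e + f ∈ S.E →
      d + e ∈ S.P → d + f ∈ S.P → d ∈ S.P ∧ e ∈ S.P ∧ f ∈ S.P := by
  intro d hd e he f hf hdef hp hq
  set cl := AddSubmonoid.closure S.E with hcl
  have hdc : d ∈ cl := AddSubmonoid.subset_closure hd
  have hec : e ∈ cl := AddSubmonoid.subset_closure he
  have hfc : f ∈ cl := AddSubmonoid.subset_closure hf
  have hcompl : (1:R) - (d + e + f) ∈ cl :=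
    AddSubmonoid.subset_closure (S.compl_mem _ hdef)
  have hp2 : (d + e) * (d + e) = d + e := hp.2
  have hq2 : (d + f) * (d + f) = d + f := hq.2
  have h1p : (1:R) - (d + e) ∈ cl := by
    have h := AddSubmonoid.add_mem cl hcompl hfc
    have heq : (1:R) - (d + e + f) + f = 1 - (d + e) := by abel
    rwa [heq] at h
  have h1q : (1:R) - (d + f) ∈ cl := by
    have h := AddSubmonoid.add_mem cl hcompl hec
    have heq : (1:R) - (d + e + f) + e = 1 - (d + f) := by abel
    rwa [heq] at h
  -- p := d + e absorbs d
  have hpd := S.absorb hdc (by rw [add_sub_cancel_left]; exact hec) hp2 h1p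
  -- q := d + f absorbs d
  have hqd := S.absorb hdc (by rw [add_sub_cancel_left]; exact hfc) hq2 h1q
  -- 1 - p absorbs f
  have h1p2 : ((1:R) - (d + e)) * (1 - (d + e)) = 1 - (d + e) := by
    rw [sub_mul, one_mul, mul_sub, mul_one, hp2]; abel
  have h1pf := S.absorb hfc
    (by have heq : (1:R) - (d + e) - f = 1 - (d + e + f) := by abel
        rw [heq]; exact hcompl)
    h1p2
    (by rw [sub_sub_cancel]; exact AddSubmonoid.add_mem cl hdc hec)
  -- deduce d * f = 0
  have h3 : (d + e) * f = 0 := by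
    have h2 := h1pf.1
    rw [sub_mul, one_mul, sub_eq_self] at h2
    exact h2
  have hdf : d * f = 0 := by
    rw [← hpd.2, mul_assoc, h3, mul_zero]
  have hd2 : d * d = d := by
    have h := hqd.2
    rwa [mul_add, hdf, add_zero] at h
  have he2 : e * e = e := by
    have hkey : e * e = (d + e) * (d + e) - (d + e) * d - d * (d + e) + d * d := by
      noncomm_ring
    rw [hp2, hpd.1, hpd.2, hd2] at hkey
    rw [hkey]; abel
  have hf2 : f * f = f := by
    have hkey : f * f = (d + f) * (d + f) - (d + f) * d - d * (d + f) + d * d := by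
      noncomm_ring
    rw [hq2, hqd.1, hqd.2, hd2] at hkey
    rw [hkey]; abel
  have memG : ∀ x, x ∈ cl → x ∈ S.G := fun x hx =>
    ⟨x, hx, 0, AddSubmonoid.zero_mem _, (sub_zero x).symm⟩
  exact ⟨⟨memG d hdc, hd2⟩, ⟨memG e hec, he2⟩, ⟨memG f hfc, hf2⟩⟩
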